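/- Let k be a field of characteristic p > 0 and v ∈ k[h]. Then the element hᵖ − h is central in the generalized Weyl algebra A(v), i.e. it commutes with x, y, and h. -/

import Mathlib

open Polynomial

/-- The defining relations of the generalized Weyl algebra `A(v)`:
generators `x = ι 0`, `y = ι 1`, `h = ι 2`, relations
`[h,x] = x`, `[h,y] = -y`, `x*y = v(h)`, `y*x = v(h-1)`. -/
inductive GWARel (k : Type*) [Field k] (v : Polynomial k) :
    FreeAlgebra k (Fin 3) → FreeAlgebra k (Fin 3) → Prop
  | hx : GWARel k v
      (FreeAlgebra.ι k (2 : Fin 3) * FreeAlgebra.ι k (0 : Fin 3) -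
        FreeAlgebra.ι k (0 : Fin 3) * FreeAlgebra.ι k (2 : Fin 3))
      (FreeAlgebra.ι k (0 : Fin 3))
  | hy : GWARel k v
      (FreeAlgebra.ι k (2 : Fin 3) * FreeAlgebra.ι k (1 : Fin 3) -
        FreeAlgebra.ι k (1 : Fin 3) * FreeAlgebra.ι k (2 : Fin 3))
      (-(FreeAlgebra.ι k (1 : Fin 3)))
  | xy : GWARel k v
      (FreeAlgebra.ι k (0 : Fin 3) * FreeAlgebra.ι k (1 : Fin 3))
      (Polynomial.aeval (FreeAlgebra.ι k (2 : Fin 3)) v)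
  | yx : GWARel k v
      (FreeAlgebra.ι k (1 : Fin 3) * FreeAlgebra.ι k (0 : Fin 3))
      (Polynomial.aeval (FreeAlgebra.ι k (2 : Fin 3) - 1) v)

/-- The generalized Weyl algebra `A(v)`. -/
abbrev GWA (k : Type*) [Field k] (v : Polynomial k) := RingQuot (GWARel k v)

variable (k : Type*) [Field k] (v : Polynomial k)

/-- The generator `x` of `A(v)`. -/
noncomputable def GWA.x : GWA k v :=
  RingQuot.mkAlgHom k (GWARel k v) (FreeAlgebra.ι k (0 : Fin 3))

/-- The generator `y` of `A(v)`. -/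
noncomputable def GWA.y : GWA k v :=
  RingQuot.mkAlgHom k (GWARel k v) (FreeAlgebra.ι k (1 : Fin 3))

/-- The generator `h` of `A(v)`. -/
noncomputable def GWA.h : GWA k v :=
  RingQuot.mkAlgHom k (GWARel k v) (FreeAlgebra.ι k (2 : Fin 3))

section Aux

variable {k : Type*} [Field k] {v : Polynomial k}

lemma GWA.hx_rel : GWA.h k v * GWA.x k v = GWA.x k v * (GWA.h k v + 1) := by
  have := RingQuot.mkAlgHom_rel k (GWARel.hx (k := k) (v := v))
  simp only [map_sub, map_mul] at this
  rw [sub_eq_iff_eq_add] at this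
  rw [GWA.h, GWA.x] at *
  rw [this, mul_add, mul_one, add_comm]

lemma GWA.hy_rel : GWA.h k v * GWA.y k v = GWA.y k v * (GWA.h k v - 1) := by
  have := RingQuot.mkAlgHom_rel k (GWARel.hy (k := k) (v := v))
  simp only [map_sub, map_mul, map_neg] at this
  rw [sub_eq_iff_eq_add] at this
  rw [GWA.h, GWA.y] at *
  rw [this, mul_sub, mul_one, neg_add_eq_sub]

lemma GWA.pow_hx_rel (n : ℕ) :
    GWA.h k v ^ n * GWA.x k v = GWA.x k v * (GWA.h k v + 1) ^ n := by
  induction n with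
  | zero => simp
  | succ n ih =>
    rw [pow_succ, mul_assoc, GWA.hx_rel, ← mul_assoc, ih, mul_assoc, ← pow_succ]

lemma GWA.pow_hy_rel (n : ℕ) :
    GWA.h k v ^ n * GWA.y k v = GWA.y k v * (GWA.h k v - 1) ^ n := by
  induction n with
  | zero => simp
  | succ n ih =>
    rw [pow_succ, mul_assoc, GWA.hy_rel, ← mul_assoc, ih, mul_assoc, ← pow_succ]

end Aux

/-- If `char k = p > 0`, then `h^p - h` commutes with `x`, `y` and `h` in `A(v)`. -/
theorem gwa_hp_sub_h_central (p : ℕ) [hp : Fact p.Prime] [CharP k p] :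
    Commute (GWA.h k v ^ p - GWA.h k v) (GWA.x k v) ∧
    Commute (GWA.h k v ^ p - GWA.h k v) (GWA.y k v) ∧
    Commute (GWA.h k v ^ p - GWA.h k v) (GWA.h k v) := by
  set h := GWA.h k v
  set x := GWA.x k v
  set y := GWA.y k v
  haveI : CharP (Polynomial k) p := inferInstance
  have poly1 : ((X : Polynomial k) + 1) ^ p = X ^ p + 1 := by
    rw [add_pow_char]; simp
  have poly2 : ((X : Polynomial k) - 1) ^ p = X ^ p - 1 := by
    rw [sub_pow_char]; simp
  have key1 : (h + 1) ^ p = h ^ p + 1 := by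
    have := congrArg (Polynomial.aeval h) poly1
    simpa using this
  have key2 : (h - 1) ^ p = h ^ p - 1 := by
    have := congrArg (Polynomial.aeval h) poly2
    simpa using this
  refine ⟨?_, ?_, ?_⟩
  · show (h ^ p - h) * x = x * (h ^ p - h)
    rw [sub_mul, GWA.pow_hx_rel, GWA.hx_rel, key1, ← mul_sub]
    simp only [x, h]
    abel
  · show (h ^ p - h) * y = y * (h ^ p - h)
    rw [sub_mul, GWA.pow_hy_rel, GWA.hy_rel, key2, ← mul_sub]
    simp only [y, h]
    abel
  · exact ((Commute.refl h).pow_left p).sub_left (Commute.refl h)
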